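/- The Earley algorithm is correct: the string w = a_1⋯a_n is in the language of G if and only if [S → α •] ∈ E_{0,n} for some production S → α ∈ P. -/

import Mathlib

/-! Formalization of Earley parsing and the Nederhof–Satta variant. -/

variable {T N : Type}

/-- A context-free grammar: a start nonterminal and a set of productions. -/
structure CFG (T N : Type) where
  initial : N
  rules : Set (N × List (Symbol T N))

/-- One rewriting step of the grammar. -/
def CFG.Produces (g : CFG T N) (u v : List (Symbol T N)) : Prop :=
  ∃ A α p q, (A, α) ∈ g.rules ∧ u = p ++ [Symbol.nonterminal A] ++ q ∧ v = p ++ α ++ q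

/-- The derivation relation ⇒* (reflexive-transitive closure of rewriting). -/
def CFG.Derives (g : CFG T N) : List (Symbol T N) → List (Symbol T N) → Prop :=
  Relation.ReflTransGen g.Produces

/-- The language of the grammar: { w | S ⇒* w }. -/
def CFG.language (g : CFG T N) : Set (List T) :=
  { w | g.Derives [Symbol.nonterminal g.initial] (w.map Symbol.terminal) }

/-- `inputSlice w i j` is the substring a_{i+1}⋯a_j of `w` (0-based: w[i..j)), as symbols. -/
def inputSlice (w : List T) (i j : ℕ) : List (Symbol T N) :=
  ((w.take j).drop i).map Symbol.terminal

/-- The least Earley table: `Earley g w A α β i j` means the dotted item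
[A → α • β] is inserted in E_{i,j}. -/
inductive Earley (g : CFG T N) (w : List T) :
    N → List (Symbol T N) → List (Symbol T N) → ℕ → ℕ → Prop where
  | init {α} : (g.initial, α) ∈ g.rules → Earley g w g.initial [] α 0 0
  | predict {B α A β i j γ} : Earley g w B α (Symbol.nonterminal A :: β) i j →
      (A, γ) ∈ g.rules → Earley g w A [] γ j j
  | scan {A α a β i j} : Earley g w A α (Symbol.terminal a :: β) i j →
      w[j]? = some a → Earley g w A (α ++ [Symbol.terminal a]) β i (j + 1)
  | complete {A α B β i k γ j} : Earley g w A α (Symbol.nonterminal B :: β) i k →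
      Earley g w B γ [] k j → (B, γ) ∈ g.rules →
      Earley g w A (α ++ [Symbol.nonterminal B]) β i j

mutual
  /-- Forward part of the variant: `VarU g w β j` means suffix item [β] ∈ U_j. -/
  inductive VarU (g : CFG T N) (w : List T) : List (Symbol T N) → ℕ → Prop where
    | init {α} : (g.initial, α) ∈ g.rules → VarU g w α 0
    | predict {A β j γ} : VarU g w (Symbol.nonterminal A :: β) j →
        (A, γ) ∈ g.rules → VarU g w γ j
    | scan {a β j} : VarU g w (Symbol.terminal a :: β) j → w[j]? = some a →
        VarU g w β (j + 1)
    | complete {B β k γ j} : VarU g w (Symbol.nonterminal B :: β) k → (B, γ) ∈ g.rules →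
        VarT g w γ k j → VarU g w β j

  /-- Backward part of the variant: `VarT g w β j m` means suffix item [β] ∈ T_{j,m}. -/
  inductive VarT (g : CFG T N) (w : List T) : List (Symbol T N) → ℕ → ℕ → Prop where
    | empty {m} : VarU g w [] m → VarT g w [] m m
    | scan {a β j m} : VarU g w (Symbol.terminal a :: β) j → w[j]? = some a →
        VarT g w β (j + 1) m → VarT g w (Symbol.terminal a :: β) j m
    | complete {B β k γ j m} : VarU g w (Symbol.nonterminal B :: β) k → (B, γ) ∈ g.rules →
        VarT g w γ k j → VarT g w β j m → VarT g w (Symbol.nonterminal B :: β) k m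
end

lemma inputSlice_eq (w : List T) (i j : ℕ) :
    inputSlice (N := N) w i j = ((w.drop i).take (j - i)).map Symbol.terminal := by
  unfold inputSlice
  rw [List.drop_take]

lemma inputSlice_length (w : List T) (i j : ℕ) :
    (inputSlice (N := N) w i j).length = min (j - i) (w.length - i) := by
  rw [inputSlice_eq, List.length_map, List.length_take, List.length_drop]

lemma inputSlice_append (w : List T) {i k j : ℕ} (hik : i ≤ k) (hkj : k ≤ j) :
    inputSlice (N := N) w i k ++ inputSlice (N := N) w k j = inputSlice w i j := by
  rw [inputSlice_eq, inputSlice_eq, inputSlice_eq, ← List.map_append]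
  congr 1
  have h1 : w.drop k = (w.drop i).drop (k - i) := by
    rw [List.drop_drop]; congr 1; omega
  rw [h1, ← List.take_add]
  congr 1; omega

lemma inputSlice_single {w : List T} {j : ℕ} {a : T} (h : w[j]? = some a) :
    inputSlice (N := N) w j (j + 1) = [Symbol.terminal a] := by
  rw [inputSlice_eq]
  have hj : j < w.length := by
    by_contra hc
    rw [getElem?_neg w j (by omega)] at h; cases h
  have : w.drop j = a :: w.drop (j + 1) := by
    rw [List.drop_eq_getElem_cons hj]
    congr 1
    exact Option.some_inj.1 ((List.getElem?_eq_getElem hj).symm.trans h)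
  simp [this]

/-- Derivations with an explicit step count. -/
inductive DerivesIn (g : CFG T N) : ℕ → List (Symbol T N) → List (Symbol T N) → Prop where
  | refl {u} : DerivesIn g 0 u u
  | head {n u v x} : g.Produces u v → DerivesIn g n v x → DerivesIn g (n + 1) u x

lemma derivesIn_of_derives {g : CFG T N} {u v : List (Symbol T N)} (h : g.Derives u v) :
    ∃ n, DerivesIn g n u v := by
  induction h using Relation.ReflTransGen.head_induction_on with
  | refl => exact ⟨0, .refl⟩
  | head hp _ ih => obtain ⟨n, hn⟩ := ih; exact ⟨n + 1, .head hp hn⟩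

lemma derives_of_derivesIn {g : CFG T N} {n : ℕ} {u v : List (Symbol T N)}
    (h : DerivesIn g n u v) : g.Derives u v := by
  induction h with
  | refl => exact Relation.ReflTransGen.refl
  | head hp _ ih => exact Relation.ReflTransGen.head hp ih

lemma produces_append_right {g : CFG T N} {u v : List (Symbol T N)} (h : g.Produces u v)
    (x : List (Symbol T N)) : g.Produces (u ++ x) (v ++ x) := by
  obtain ⟨A, α, p, q, hr, hu, hv⟩ := h
  exact ⟨A, α, p, q ++ x, hr, by simp [hu], by simp [hv]⟩

lemma produces_append_left {g : CFG T N} {u v : List (Symbol T N)} (h : g.Produces u v)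
    (x : List (Symbol T N)) : g.Produces (x ++ u) (x ++ v) := by
  obtain ⟨A, α, p, q, hr, hu, hv⟩ := h
  exact ⟨A, α, x ++ p, q, hr, by simp [hu], by simp [hv]⟩

lemma derives_append_right {g : CFG T N} {u v : List (Symbol T N)} (h : g.Derives u v)
    (x : List (Symbol T N)) : g.Derives (u ++ x) (v ++ x) :=
  Relation.ReflTransGen.lift (· ++ x) (fun _ _ hp => produces_append_right hp x) _ _ h

lemma derives_append_left {g : CFG T N} {u v : List (Symbol T N)} (h : g.Derives u v)
    (x : List (Symbol T N)) : g.Derives (x ++ u) (x ++ v) :=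
  Relation.ReflTransGen.lift (x ++ ·) (fun _ _ hp => produces_append_left hp x) _ _ h

lemma no_produces_terminal {g : CFG T N} {l : List T} {v : List (Symbol T N)} :
    ¬ g.Produces (l.map Symbol.terminal) v := by
  rintro ⟨A, α, p, q, _, hu, _⟩
  have : (Symbol.nonterminal A : Symbol T N) ∈ l.map Symbol.terminal := by
    rw [hu]; simp
  obtain ⟨a, _, ha⟩ := List.mem_map.1 this
  cases ha

lemma derivesIn_terminal {g : CFG T N} {n : ℕ} {l : List T} {v : List (Symbol T N)}
    (h : DerivesIn g n (l.map Symbol.terminal) v) : v = l.map Symbol.terminal := by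
  cases h with
  | refl => rfl
  | head hp _ => exact absurd hp no_produces_terminal

lemma produces_append_split {g : CFG T N} {u v x : List (Symbol T N)}
    (h : g.Produces (u ++ v) x) :
    (∃ u', g.Produces u u' ∧ x = u' ++ v) ∨ (∃ v', g.Produces v v' ∧ x = u ++ v') := by
  obtain ⟨A, α, p, q, hr, hu, hv⟩ := h
  rw [List.append_assoc] at hu
  rcases List.append_eq_append_iff.1 hu.symm with ⟨a', hu1, hu2⟩ | ⟨c', hp, hv2⟩
  · -- u = p ++ a', a' ++ v = [N A] ++ q
    cases a' with
    | nil =>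
      right
      refine ⟨α ++ q, ⟨A, α, [], q, hr, by simpa using hu2.symm, by simp⟩, ?_⟩
      simp at hu1
      simp [hv, hu1]
    | cons s a'' =>
      left
      obtain ⟨hs, hq⟩ : s = Symbol.nonterminal A ∧ q = a'' ++ v := by
        have := hu2
        simp at this
        exact ⟨this.1.symm, this.2⟩
      refine ⟨p ++ α ++ a'', ⟨A, α, p, a'', hr, by simp [hu1, hs], rfl⟩, ?_⟩
      simp [hv, hq]
  · -- p = u ++ c', v = c' ++ [N A] ++ q
    right
    refine ⟨c' ++ α ++ q, ⟨A, α, c', q, hr, by simpa using hv2, rfl⟩, ?_⟩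
    simp [hv, hp]

lemma derivesIn_append_split {g : CFG T N} {n : ℕ} {u v x : List (Symbol T N)}
    (h : DerivesIn g n (u ++ v) x) :
    ∃ n1 n2 x1 x2, n1 + n2 = n ∧ x = x1 ++ x2 ∧ DerivesIn g n1 u x1 ∧ DerivesIn g n2 v x2 := by
  induction n generalizing u v with
  | zero => cases h; exact ⟨0, 0, u, v, rfl, rfl, .refl, .refl⟩
  | succ n ih =>
    cases h with
    | head hp hrest =>
      rcases produces_append_split hp with ⟨u', hu', rfl⟩ | ⟨v', hv', rfl⟩
      · obtain ⟨n1, n2, x1, x2, hn, hx, h1, h2⟩ := ih hrest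
        exact ⟨n1 + 1, n2, x1, x2, by omega, hx, .head hu' h1, h2⟩
      · obtain ⟨n1, n2, x1, x2, hn, hx, h1, h2⟩ := ih hrest
        exact ⟨n1, n2 + 1, x1, x2, by omega, hx, h1, .head hv' h2⟩

lemma derivesIn_nonterminal {g : CFG T N} {n : ℕ} {A : N} {x : List (Symbol T N)}
    (hx : ∀ B, Symbol.nonterminal B ∉ x)
    (h : DerivesIn g n [Symbol.nonterminal A] x) :
    ∃ γ m, (A, γ) ∈ g.rules ∧ m < n ∧ DerivesIn g m γ x := by
  cases h with
  | refl => exact absurd (by simp : Symbol.nonterminal A ∈ _) (hx A)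
  | head hp hrest =>
    obtain ⟨A', α, p, q, hr, hu, hv⟩ := hp
    obtain ⟨hp0, hA, hq0⟩ : p = [] ∧ A' = A ∧ q = [] := by
      have hl : p.length + (q.length + 1) = 1 := by
        have := congrArg List.length hu
        simpa [List.length_append] using this.symm
      have hp0 : p = [] := List.eq_nil_of_length_eq_zero (by omega)
      have hq0 : q = [] := List.eq_nil_of_length_eq_zero (by omega)
      subst hp0 hq0
      simp at hu
      exact ⟨rfl, hu.symm, rfl⟩
    subst hp0 hq0 hA
    simp at hv
    subst hv
    exact ⟨_, _, hr, Nat.lt_succ_self _, hrest⟩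

lemma earley_sound {g : CFG T N} {w : List T} {A α β i j} (h : Earley g w A α β i j) :
    (A, α ++ β) ∈ g.rules ∧ g.Derives α (inputSlice w i j) ∧ i ≤ j ∧ j ≤ w.length := by
  induction h with
  | init hr =>
    exact ⟨hr, by simp only [inputSlice, List.drop_nil, List.take_nil, List.drop_zero]; cases w <;> exact Relation.ReflTransGen.refl, le_refl _, Nat.zero_le _⟩
  | predict _ hr ih =>
    refine ⟨hr, ?_, le_refl _, ih.2.2.2⟩
    rw [inputSlice_eq]
    simp only [Nat.sub_self, List.take_zero, List.map_nil]
    exact Relation.ReflTransGen.refl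
  | @scan A α a β i j _ hget ih =>
    obtain ⟨hr, hd, hij, hjl⟩ := ih
    have hj : j < w.length := by
      by_contra hc
      rw [getElem?_neg w j (by omega)] at hget; cases hget
    refine ⟨by simpa using hr, ?_, by omega, by omega⟩
    rw [← inputSlice_append (w := w) hij (Nat.le_succ j), inputSlice_single hget]
    exact derives_append_right hd _
  | @complete A α B β i k γ j _ _ hr ih1 ih2 =>
    obtain ⟨hr1, hd1, hik, hkl⟩ := ih1
    obtain ⟨hr2, hd2, hkj, hjl⟩ := ih2
    refine ⟨by simpa using hr1, ?_, by omega, hjl⟩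
    rw [← inputSlice_append (w := w) hik hkj]
    refine Relation.ReflTransGen.trans (derives_append_right hd1 _) ?_
    refine derives_append_left ?_ _
    have hr2' : (B, γ) ∈ g.rules := by simpa using hr2
    refine Relation.ReflTransGen.head (b := γ) ⟨B, γ, [], [], hr2', by simp, by simp⟩ ?_
    simpa [CFG.Derives] using hd2

lemma map_append_split {u v : List (Symbol T N)} {l : List T}
    (h : l.map Symbol.terminal = u ++ v) :
    ∃ l1 l2 : List T, l = l1 ++ l2 ∧ u = l1.map Symbol.terminal ∧ v = l2.map Symbol.terminal := by
  refine ⟨l.take u.length, l.drop u.length, (List.take_append_drop _ _).symm, ?_, ?_⟩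
  · rw [List.map_take, h, List.take_left]
  · rw [List.map_drop, h, List.drop_left]

lemma inputSlice_eq_nil {w : List T} {j k : ℕ} (hjk : j ≤ k) (hk : k ≤ w.length)
    (h : inputSlice (N := N) w j k = []) : k = j := by
  have := congrArg List.length h
  rw [inputSlice_length] at this
  simp at this
  omega

lemma inputSlice_cons_terminal {w : List T} {j k : ℕ} {a : T} {β : List (Symbol T N)}
    (h : inputSlice (N := N) w j k = Symbol.terminal a :: β) :
    w[j]? = some a ∧ β = inputSlice w (j + 1) k := by
  rw [inputSlice_eq] at h
  cases hd : w.drop j with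
  | nil => rw [hd] at h; simp at h
  | cons b t =>
    obtain ⟨m, hm⟩ : ∃ m, k - j = m + 1 := by
      rcases Nat.eq_zero_or_pos (k - j) with h0 | h0
      · rw [h0, hd] at h; simp at h
      · exact ⟨k - j - 1, by omega⟩
    rw [hm, hd, List.take_succ_cons] at h
    simp only [List.map_cons, List.cons.injEq, Symbol.terminal.injEq] at h
    obtain ⟨hba, hβ⟩ := h
    have ht : t = w.drop (j + 1) := by
      have : (w.drop j).drop 1 = w.drop (j + 1) := by rw [List.drop_drop]
      rw [hd] at this
      simpa using this
    constructor
    · have h0 := List.getElem?_drop (xs := w) (i := j) (j := 0)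
      rw [hd] at h0
      simpa [hba] using h0.symm
    · rw [inputSlice_eq, show k - (j + 1) = m by omega, ← ht]
      exact hβ.symm

lemma inputSlice_split {w : List T} {j k : ℕ} {x1 x2 : List (Symbol T N)}
    (hjk : j ≤ k) (hk : k ≤ w.length) (h : inputSlice (N := N) w j k = x1 ++ x2) :
    x1 = inputSlice w j (j + x1.length) ∧ x2 = inputSlice w (j + x1.length) k ∧
      j + x1.length ≤ k := by
  have hlen : (inputSlice (N := N) w j k).length = k - j := by
    rw [inputSlice_length]; omega
  have hd : x1.length + x2.length = k - j := by
    rw [← hlen, h, List.length_append]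
  have hdle : j + x1.length ≤ k := by omega
  refine ⟨?_, ?_, hdle⟩
  · have h1 : x1 = (inputSlice (N := N) w j k).take x1.length := by
      rw [h, List.take_left]
    conv_lhs => rw [h1]
    rw [inputSlice_eq, inputSlice_eq, ← List.map_take, List.take_take,
      min_eq_left (show x1.length ≤ k - j by omega),
      show j + x1.length - j = x1.length by omega]
  · have h2 : x2 = (inputSlice (N := N) w j k).drop x1.length := by
      rw [h, List.drop_left]
    conv_lhs => rw [h2]
    rw [inputSlice_eq, inputSlice_eq, ← List.map_drop, List.drop_take, List.drop_drop,
      show j + x1.length = x1.length + j from by omega,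
      show k - j - x1.length = k - (x1.length + j) from by omega]

lemma earley_complete_aux {g : CFG T N} {w : List T} :
    ∀ n (β α : List (Symbol T N)) (A : N) (i j k : ℕ), Earley g w A α β i j →
      DerivesIn g n β (inputSlice w j k) → j ≤ k → k ≤ w.length →
      Earley g w A (α ++ β) [] i k := by
  intro n
  induction n using Nat.strong_induction_on with
  | _ n IHn =>
  intro β
  induction β with
  | nil =>
    intro α A i j k hE hD hjk hk
    have hnil : inputSlice (N := N) w j k = [] := by
      simpa using derivesIn_terminal (l := ([] : List T)) (by simpa using hD)
    have := inputSlice_eq_nil hjk hk hnil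
    subst this
    simpa using hE
  | cons s β' IHβ =>
    intro α A i j k hE hD hjk hk
    cases s with
    | terminal a =>
      obtain ⟨n1, n2, x1, x2, hn, hx, h1, h2⟩ :=
        derivesIn_append_split (u := [Symbol.terminal a]) (v := β') hD
      have hx1 : x1 = [Symbol.terminal a] := derivesIn_terminal (l := [a]) h1
      subst hx1
      obtain ⟨hget, hx2⟩ := inputSlice_cons_terminal (β := x2) (by simpa using hx)
      have hE' : Earley g w A (α ++ [Symbol.terminal a]) β' i (j + 1) := hE.scan hget
      have hjk1 : j + 1 ≤ k := by
        have := congrArg List.length hx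
        rw [inputSlice_length] at this
        simp at this
        omega
      have hD2 : DerivesIn g n2 β' (inputSlice w (j + 1) k) := hx2 ▸ h2
      have hmain : Earley g w A ((α ++ [Symbol.terminal a]) ++ β') [] i k := by
        rcases eq_or_lt_of_le (show n2 ≤ n by omega) with rfl | hlt
        · exact IHβ _ _ _ _ _ hE' hD2 hjk1 hk
        · exact IHn n2 hlt β' _ _ _ _ _ hE' hD2 hjk1 hk
      simpa [List.append_assoc] using hmain
    | nonterminal B =>
      obtain ⟨n1, n2, x1, x2, hn, hx, h1, h2⟩ :=
        derivesIn_append_split (u := [Symbol.nonterminal B]) (v := β') hD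
      obtain ⟨l1, l2, hl, hx1, hx2⟩ := map_append_split (l := (w.take k).drop j)
        (by simpa [inputSlice] using hx)
      have hx1' : ∀ C, Symbol.nonterminal C ∉ x1 := by
        intro C hC
        rw [hx1] at hC
        obtain ⟨c, _, hc⟩ := List.mem_map.1 hC
        cases hc
      obtain ⟨γ, m, hr, hm, hDγ⟩ := derivesIn_nonterminal hx1' h1
      obtain ⟨hs1, hs2, hjd⟩ := inputSlice_split hjk hk hx
      set j' := j + x1.length with hj'
      have hEB : Earley g w B [] γ j j := hE.predict hr
      have hEB' : Earley g w B γ [] j j' := by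
        have := IHn m (by omega) γ [] B j j j' hEB (hs1 ▸ hDγ) (by omega) (by omega)
        simpa using this
      have hE' : Earley g w A (α ++ [Symbol.nonterminal B]) β' i j' := hE.complete hEB' hr
      have hD2 : DerivesIn g n2 β' (inputSlice w j' k) := hs2 ▸ h2
      have hmain : Earley g w A ((α ++ [Symbol.nonterminal B]) ++ β') [] i k := by
        rcases eq_or_lt_of_le (show n2 ≤ n by omega) with rfl | hlt
        · exact IHβ _ _ _ _ _ hE' hD2 hjd hk
        · exact IHn n2 hlt β' _ _ _ _ _ hE' hD2 hjd hk
      simpa [List.append_assoc] using hmain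

/-- Earley is correct: w ∈ L(G) iff [S → α •] ∈ E_{0,n} for some S → α ∈ P. -/
theorem earley_correct (g : CFG T N) (w : List T) :
    w ∈ g.language ↔
      ∃ α, (g.initial, α) ∈ g.rules ∧ Earley g w g.initial α [] 0 w.length := by
  have hslice : w.map Symbol.terminal = inputSlice (N := N) w 0 w.length := by
    simp [inputSlice]
  constructor
  · intro hw
    obtain ⟨n, hn⟩ := derivesIn_of_derives hw
    have hx : ∀ B : N, Symbol.nonterminal B ∉ w.map Symbol.terminal := by
      intro B hB
      obtain ⟨c, _, hc⟩ := List.mem_map.1 hB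
      cases hc
    obtain ⟨γ, m, hr, hm, hD⟩ := derivesIn_nonterminal hx hn
    refine ⟨γ, hr, ?_⟩
    have := earley_complete_aux m γ [] g.initial 0 0 w.length (Earley.init hr)
      (hslice ▸ hD) (Nat.zero_le _) (le_refl _)
    simpa using this
  · rintro ⟨α, hr, hE⟩
    obtain ⟨_, hd, _, _⟩ := earley_sound hE
    have hstep : g.Produces [Symbol.nonterminal g.initial] α :=
      ⟨g.initial, α, [], [], hr, by simp, by simp⟩
    have hfin : g.Derives [Symbol.nonterminal g.initial] (inputSlice w 0 w.length) :=
      Relation.ReflTransGen.head (b := α) hstep hd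
    show g.Derives _ _
    rw [hslice]
    exact hfin
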